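/- Rank-one representation of the centered Bernoulli probability matrix for K = 2. Let Ω = ΘΠPΠ′Θ with θ ∈ ℝ^n positive, two nonempty communities S and S^c encoded by Π, and P = [[1, b],[b, 1]] for some b ∈ ℝ. Let v₀ = 1_n′Ω1_n and assume v₀ ≠ 0. Let f = (‖θ_{S^c}‖₁, −‖θ_S‖₁)′ ∈ ℝ², where θ_S denotes the restriction of θ to S. Then Ω̃ := Ω − v₀^{-1}Ω1_n1_n′Ω = ((1 − b²)/v₀) · ΘΠ f f′ Π′Θ. Equivalently, entrywise: Ω̃_{ij} = θ_iθ_j(1−b²)‖θ_{S^c}‖₁²/v₀ if i,j ∈ S; Ω̃_{ij} = −θ_iθ_j(1−b²)‖θ_S‖₁‖θ_{S^c}‖₁/v₀ if exactly one of i,j is in S; and Ω̃_{ij} = θ_iθ_j(1−b²)‖θ_S‖₁²/v₀ if i,j ∈ S^c. -/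
import Mathlib


open Finset

/-- The centered Bernoulli probability matrix `Ω̃ = Ω - (1ₙ'Ω1ₙ)⁻¹ Ω1ₙ1ₙ'Ω`. -/
noncomputable def centered {n : ℕ} (M : Fin n → Fin n → ℝ) : Fin n → Fin n → ℝ :=
  fun i j => M i j - (∑ k, ∑ l, M k l)⁻¹ * (∑ k, M i k) * (∑ l, M j l)

/-- Rank-one representation of the centered Bernoulli probability
matrix for `K = 2` with unit-diagonal `P`:
`Ω̃ = ((1-b²)/v₀) ΘΠ f f' Π'Θ` where `f = (‖θ_{Sᶜ}‖₁, -‖θ_S‖₁)'`. -/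
theorem centered_matrix_rank_one
    (n : ℕ) (θ : Fin n → ℝ) (hθ : ∀ i, 0 < θ i)
    (S : Finset (Fin n)) (hS : S.Nonempty) (hSc : Sᶜ.Nonempty)
    (b : ℝ)
    (Ω : Fin n → Fin n → ℝ)
    (hΩ : ∀ i j, Ω i j = θ i * θ j * (if (i ∈ S ↔ j ∈ S) then 1 else b))
    (v₀ : ℝ) (hv₀ : v₀ = ∑ i, ∑ j, Ω i j) (hv₀ne : v₀ ≠ 0) :
    ∀ i j, centered Ω i j =
      ((1 - b ^ 2) / v₀) * θ i * θ j *
        ((if i ∈ S then ∑ k ∈ Sᶜ, θ k else -(∑ k ∈ S, θ k)) *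
         (if j ∈ S then ∑ k ∈ Sᶜ, θ k else -(∑ k ∈ S, θ k))) := by
  set a : ℝ := ∑ k ∈ S, θ k with ha
  set c : ℝ := ∑ k ∈ Sᶜ, θ k with hc
  have hrow : ∀ i, ∑ k, Ω i k = θ i * (if i ∈ S then a + b * c else b * a + c) := by
    intro i
    rw [← Finset.sum_add_sum_compl S (fun k => Ω i k)]
    have h1 : ∑ k ∈ S, Ω i k = θ i * ((if i ∈ S then (1:ℝ) else b) * a) := by
      rw [ha, Finset.mul_sum, Finset.mul_sum]
      refine Finset.sum_congr rfl fun k hk => ?_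
      rw [hΩ]
      by_cases hi : i ∈ S <;> simp [hi, hk] <;> ring
    have h2 : ∑ k ∈ Sᶜ, Ω i k = θ i * ((if i ∈ S then b else (1:ℝ)) * c) := by
      rw [hc, Finset.mul_sum, Finset.mul_sum]
      refine Finset.sum_congr rfl fun k hk => ?_
      rw [hΩ]
      have hk' : k ∉ S := Finset.mem_compl.mp hk
      by_cases hi : i ∈ S <;> simp [hi, hk'] <;> ring
    rw [h1, h2]
    by_cases hi : i ∈ S <;> simp [hi] <;> ring
  have hv : v₀ = a * (a + b * c) + c * (b * a + c) := by
    rw [hv₀, ← Finset.sum_add_sum_compl S (fun i => ∑ j, Ω i j)]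
    have h1 : ∑ i ∈ S, ∑ j, Ω i j = a * (a + b * c) := by
      rw [ha, Finset.sum_mul]
      refine Finset.sum_congr rfl fun i hi => ?_
      rw [hrow i, if_pos hi]
    have h2 : ∑ i ∈ Sᶜ, ∑ j, Ω i j = c * (b * a + c) := by
      rw [hc, Finset.sum_mul]
      refine Finset.sum_congr rfl fun i hi => ?_
      rw [hrow i, if_neg (Finset.mem_compl.mp hi)]
    rw [h1, h2]
  intro i j
  have hsum : ∑ k, ∑ l, Ω k l = v₀ := hv₀.symm
  unfold centered
  rw [hsum, hrow i, hrow j, hΩ]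
  by_cases hi : i ∈ S <;> by_cases hj : j ∈ S <;>
    simp only [hi, hj, if_pos, if_neg, iff_true, iff_false, not_true, not_false_iff,
      if_true] <;>
  · field_simp
    rw [hv]
    ring
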